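/- Let e be a primitive ascent sequence of length n with k ascents, and partition e into maximal (strictly) decreasing runs; let t(e) be the sequence of minimal entries of these runs (which has length k+1). Then e avoids the vincular pattern 1̲2̲0 if and only if t(e) is non-decreasing. -/

import Mathlib

open scoped Classical

/-- `e` is an inversion sequence (0-based indexing: `e i < i+1`, i.e. `e i ≤ i`). -/
def IsInvSeq (e : List ℕ) : Prop := ∀ i, i < e.length → e.getD i 0 ≤ i

/-- Number of ascents of `e`. -/
def ascents (e : List ℕ) : ℕ :=
  ((List.range (e.length - 1)).filter (fun i => decide (e.getD i 0 < e.getD (i + 1) 0))).length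

/-- `e` is an ascent sequence. -/
def IsAscSeq (e : List ℕ) : Prop :=
  IsInvSeq e ∧ ∀ i, i + 1 < e.length → e.getD (i + 1) 0 ≤ ascents (e.take (i + 1)) + 1

/-- `e` avoids the vincular pattern 12-0 : no indices `1 ≤ i < j < e.length`
(0-based) with `e j < e (i-1) < e i`. -/
def Avoids120 (e : List ℕ) : Prop :=
  ¬ ∃ i j, 1 ≤ i ∧ i < j ∧ j < e.length ∧
      e.getD j 0 < e.getD (i - 1) 0 ∧ e.getD (i - 1) 0 < e.getD i 0

/-- `e` is primitive: no two equal consecutive entries. -/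
def IsPrimitive (e : List ℕ) : Prop := ∀ i, i + 1 < e.length → e.getD i 0 ≠ e.getD (i + 1) 0

/-- The tail sequence of a primitive ascent sequence: the minimal (last) entry of each
maximal strictly decreasing consecutive run, in order. For a primitive sequence, position `i`
is the end of a run iff it is the last position or `e i < e (i+1)`. -/
def tailSeq (e : List ℕ) : List ℕ :=
  (List.range e.length).filterMap (fun i =>
    if i + 1 = e.length ∨ e.getD i 0 < e.getD (i + 1) 0 then some (e.getD i 0) else none)

lemma sorted_tail_iff (e : List ℕ) :
    List.Pairwise (· ≤ ·) (tailSeq e) ↔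
      ∀ p q, p < q → q < e.length →
        (p + 1 = e.length ∨ e.getD p 0 < e.getD (p+1) 0) →
        (q + 1 = e.length ∨ e.getD q 0 < e.getD (q+1) 0) →
        e.getD p 0 ≤ e.getD q 0 := by
  unfold tailSeq
  rw [List.pairwise_filterMap, List.pairwise_iff_getElem]
  simp only [List.getElem_range, List.length_range]
  constructor
  · intro h p q hpq hq hp' hq'
    exact h p q (hpq.trans hq) hq hpq (e.getD p 0) (by rw [if_pos hp'])
      (e.getD q 0) (by rw [if_pos hq'])
  · intro h i j hi hj hij b hb b' hb'
    by_cases hci : i + 1 = e.length ∨ e.getD i 0 < e.getD (i+1) 0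
    · by_cases hcj : j + 1 = e.length ∨ e.getD j 0 < e.getD (j+1) 0
      · rw [if_pos hci] at hb
        rw [if_pos hcj] at hb'
        rw [Option.some_inj] at hb hb'
        subst hb; subst hb'
        exact h i j hij hj hci hcj
      · rw [if_neg hcj] at hb'; simp at hb'
    · rw [if_neg hci] at hb; simp at hb

lemma run_min (e : List ℕ) (hprim : IsPrimitive e) :
    ∀ d j, j < e.length → e.length - j ≤ d →
      ∃ q, j ≤ q ∧ q < e.length ∧
        (q + 1 = e.length ∨ e.getD q 0 < e.getD (q+1) 0) ∧ e.getD q 0 ≤ e.getD j 0 := by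
  intro d
  induction d with
  | zero => intro j hj h0; omega
  | succ d ih =>
    intro j hj hd
    by_cases hc : j + 1 = e.length ∨ e.getD j 0 < e.getD (j+1) 0
    · exact ⟨j, le_refl _, hj, hc, le_refl _⟩
    · push_neg at hc
      obtain ⟨h1, h2⟩ := hc
      have hj1 : j + 1 < e.length := by omega
      have hne := hprim j hj1
      have hlt : e.getD (j+1) 0 < e.getD j 0 := by omega
      obtain ⟨q, hq1, hq2, hq3, hq4⟩ := ih (j+1) hj1 (by omega)
      exact ⟨q, by omega, hq2, hq3, le_trans hq4 (le_of_lt hlt)⟩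

theorem stmt2 (n k : ℕ) (e : List ℕ) (hlen : e.length = n)
    (hasc : IsAscSeq e) (hprim : IsPrimitive e) (hk : ascents e = k) :
    Avoids120 e ↔ List.Pairwise (· ≤ ·) (tailSeq e) := by
  rw [sorted_tail_iff]
  constructor
  · intro hav p q hpq hq hp' hq'
    by_contra hcon
    push_neg at hcon
    have hp1 : p + 1 ≠ e.length := by omega
    have hplt : e.getD p 0 < e.getD (p+1) 0 := hp'.resolve_left hp1
    have hne : q ≠ p + 1 := by
      intro h; subst h; omega
    exact hav ⟨p + 1, q, by omega, by omega, hq, by simpa using hcon, by simpa using hplt⟩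
  · rintro hsort ⟨i, j, hi1, hij, hj, hja, hai⟩
    obtain ⟨q, hq1, hq2, hq3, hq4⟩ := run_min e hprim e.length j hj (by omega)
    have hrunend : (i - 1) + 1 = e.length ∨ e.getD (i-1) 0 < e.getD ((i-1)+1) 0 := by
      right
      have : i - 1 + 1 = i := by omega
      rw [this]; exact hai
    have := hsort (i - 1) q (by omega) hq2 hrunend hq3
    omega
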